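/- For every real α ≥ 1, ∑_{j=0}^{∞} log(j + α) / (j² + 4) ≤ (5/2) · log(α + 1). -/

import Mathlib

open Finset

/-- Numeric upper bound on `log y` from a power/dyadic certificate. -/
lemma log_le_num (y : ℝ) (n a : ℕ) (x q : ℝ) (hy : 1 ≤ y) (hn : 0 < n) (hx1 : (1:ℝ) ≤ x)
    (hx : y ^ n ≤ 2 ^ a * x) (hq : (a : ℝ) * 0.6931471808 + (x - 1) ≤ n * q) :
    Real.log y ≤ q := by
  have hyp : (0:ℝ) < y ^ n := by positivity
  have h2 : Real.log (y ^ n) ≤ Real.log (2 ^ a * x) := Real.log_le_log hyp hx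
  rw [Real.log_pow] at h2
  rw [Real.log_mul (by positivity) (by linarith)] at h2
  rw [Real.log_pow] at h2
  have h4 : Real.log x ≤ x - 1 := Real.log_le_sub_one_of_pos (by linarith)
  have h5 : Real.log 2 ≤ 0.6931471808 := Real.log_two_lt_d9.le
  have h6 : (a:ℝ) * Real.log 2 ≤ (a:ℝ) * 0.6931471808 :=
    mul_le_mul_of_nonneg_left h5 (Nat.cast_nonneg a)
  have h7 : (n:ℝ) * Real.log y ≤ (n:ℝ) * q := by linarith
  have hn' : (0:ℝ) < n := by exact_mod_cast hn
  exact le_of_mul_le_mul_left h7 hn'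

/-- telescoping bound for `1/((t+1)^2+4)`. -/
lemma tel_u (t : ℝ) (ht : 1 ≤ t) : 1 / ((t+1)^2 + 4) ≤ 1/t - 1/(t+1) := by
  have h0 : (0:ℝ) < t := by linarith
  have h1 : (0:ℝ) < t + 1 := by linarith
  have key : 1/t - 1/(t+1) = 1/(t*(t+1)) := by field_simp; ring
  rw [key]
  apply one_div_le_one_div_of_le (by positivity)
  nlinarith

/-- telescoping bound for `log(t+2)/((t+1)^2+4)`. -/
lemma tel_v (t : ℝ) (ht : 2 ≤ t) :
    Real.log (t+2) / ((t+1)^2 + 4) ≤ (Real.log t + 2)/t - (Real.log (t+1) + 2)/(t+1) := by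
  have h0 : (0:ℝ) < t := by linarith
  have h1 : (0:ℝ) < t + 1 := by linarith
  have h2 : (0:ℝ) < t + 2 := by linarith
  have hA : 0 ≤ Real.log t := Real.log_nonneg (by linarith)
  have hB1 : Real.log (t+1) ≤ Real.log t + 1/t := by
    have : Real.log (t+1) - Real.log t = Real.log ((t+1)/t) := by
      rw [Real.log_div (by positivity) (by positivity)]
    have h3 : Real.log ((t+1)/t) ≤ (t+1)/t - 1 := Real.log_le_sub_one_of_pos (by positivity)
    have h4 : (t+1)/t - 1 = 1/t := by field_simp; ring
    linarith [this, h3, h4 ▸ h3]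
  have hC1 : Real.log (t+2) ≤ Real.log t + 1 := by
    have he : Real.log (t+2) - Real.log t = Real.log ((t+2)/t) := by
      rw [Real.log_div (by positivity) (by positivity)]
    have h3 : Real.log ((t+2)/t) ≤ (t+2)/t - 1 := Real.log_le_sub_one_of_pos (by positivity)
    have h4 : (t+2)/t - 1 = 2/t := by field_simp; ring
    have h5 : 2/t ≤ 1 := by rw [div_le_one h0]; linarith
    linarith
  -- first reduce denominator to t*(t+1)
  have step1 : Real.log (t+2) / ((t+1)^2 + 4) ≤ Real.log (t+2) / (t*(t+1)) := by
    apply div_le_div_of_nonneg_left (Real.log_nonneg (by linarith)) (by positivity)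
    nlinarith
  have step2 : Real.log (t+2) / (t*(t+1)) ≤ (Real.log t + 2)/t - (Real.log (t+1) + 2)/(t+1) := by
    rw [div_sub_div _ _ (ne_of_gt h0) (ne_of_gt h1), le_div_iff₀ (by positivity),
        div_mul_eq_mul_div, div_le_iff₀ (by positivity)]
    have hnum : Real.log (t+2) ≤ (Real.log t + 2) * (t+1) - t * (Real.log (t+1) + 2) := by
      have : t * Real.log (t+1) ≤ t * (Real.log t + 1/t) :=
        mul_le_mul_of_nonneg_left hB1 h0.le
      have ht1 : t * (1/t) = 1 := by field_simp
      nlinarith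
    nlinarith [Real.log_nonneg (show (1:ℝ) ≤ t + 2 by linarith), mul_pos h0 h1]
  linarith

/-- partial sums of `1/(j^2+4)` are at most `U = 910961/1000000`. -/
lemma lem_u (n : ℕ) : ∑ j ∈ range n, 1/((j:ℝ)^2+4) ≤ 910961/1000000 := by
  have hnonneg : ∀ j : ℕ, 0 ≤ 1/((j:ℝ)^2+4) := fun j => by positivity
  have base : ∑ j ∈ range 32, 1/((j:ℝ)^2+4) ≤ 879703/1000000 := by
    norm_num [Finset.sum_range_succ]
  rcases le_or_gt n 32 with h | h
  · calc ∑ j ∈ range n, 1/((j:ℝ)^2+4)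
        ≤ ∑ j ∈ range 32, 1/((j:ℝ)^2+4) :=
          Finset.sum_le_sum_of_subset_of_nonneg (Finset.range_subset_range.2 h) (fun i _ _ => hnonneg i)
      _ ≤ 910961/1000000 := by linarith
  · have hsplit : ∑ j ∈ range n, 1/((j:ℝ)^2+4)
        = ∑ j ∈ range 32, 1/((j:ℝ)^2+4) + ∑ j ∈ Ico 32 n, 1/((j:ℝ)^2+4) := by
      rw [range_eq_Ico, ← Finset.sum_Ico_consecutive _ (Nat.zero_le 32) h.le, ← range_eq_Ico]
    have htail : ∑ j ∈ Ico 32 n, 1/((j:ℝ)^2+4) ≤ 1/31 := by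
      rw [Finset.sum_Ico_eq_sum_range]
      set g : ℕ → ℝ := fun i => 1/(31+(i:ℝ)) with hg
      have hterm : ∀ i ∈ range (n - 32), 1/(((32+i:ℕ):ℝ)^2+4) ≤ g i - g (i+1) := by
        intro i _
        have := tel_u (31+(i:ℝ)) (by have := (Nat.cast_nonneg i : (0:ℝ) ≤ i); linarith)
        simp only [hg]
        push_cast
        convert this using 2 <;> push_cast <;> ring
      calc ∑ i ∈ range (n-32), 1/(((32+i:ℕ):ℝ)^2+4)
          ≤ ∑ i ∈ range (n-32), (g i - g (i+1)) := Finset.sum_le_sum hterm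
        _ = g 0 - g (n-32) := Finset.sum_range_sub' g (n-32)
        _ ≤ g 0 := by
            have : 0 ≤ g (n-32) := by simp only [hg]; positivity
            linarith
        _ = 1/31 := by simp [hg]
    linarith

/-- partial sums of `log(j+1)/(j^2+4)` are at most `C = 131753/125000`. -/
lemma lem_v (n : ℕ) : ∑ j ∈ range n, Real.log ((j:ℝ)+1)/((j:ℝ)^2+4) ≤ 131753/125000 := by
  have hnonneg : ∀ j : ℕ, 0 ≤ Real.log ((j:ℝ)+1)/((j:ℝ)^2+4) := fun j =>
    div_nonneg (Real.log_nonneg (by have := (Nat.cast_nonneg j : (0:ℝ) ≤ j); linarith)) (by positivity)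
  have q2 : Real.log 2 ≤ 173287/250000 := log_le_num 2 8 8 (1) (173287/250000) (by norm_num) (by norm_num) (by norm_num) (by norm_num) (by norm_num)
  have q3 : Real.log 3 ≤ 1114947/1000000 := log_le_num 3 8 12 (1601807/1000000) (1114947/1000000) (by norm_num) (by norm_num) (by norm_num) (by norm_num) (by norm_num)
  have q4 : Real.log 4 ≤ 277259/200000 := log_le_num 4 8 16 (1) (277259/200000) (by norm_num) (by norm_num) (by norm_num) (by norm_num) (by norm_num)
  have q5 : Real.log 5 ≤ 810423/500000 := log_le_num 5 8 18 (1490117/1000000) (810423/500000) (by norm_num) (by norm_num) (by norm_num) (by norm_num) (by norm_num)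
  have q6 : Real.log 6 ≤ 904047/500000 := log_le_num 6 8 20 (1601807/1000000) (904047/500000) (by norm_num) (by norm_num) (by norm_num) (by norm_num) (by norm_num)
  have q7 : Real.log 7 ≤ 6103/3125 := log_le_num 7 8 22 (343609/250000) (6103/3125) (by norm_num) (by norm_num) (by norm_num) (by norm_num) (by norm_num)
  have q8 : Real.log 8 ≤ 1039721/500000 := log_le_num 8 8 24 (1) (1039721/500000) (by norm_num) (by norm_num) (by norm_num) (by norm_num) (by norm_num)
  have q9 : Real.log 9 ≤ 2201447/1000000 := log_le_num 9 8 25 (1282893/1000000) (2201447/1000000) (by norm_num) (by norm_num) (by norm_num) (by norm_num) (by norm_num)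
  have q10 : Real.log 10 ≤ 2313993/1000000 := log_le_num 10 8 26 (1490117/1000000) (2313993/1000000) (by norm_num) (by norm_num) (by norm_num) (by norm_num) (by norm_num)
  have q11 : Real.log 11 ≤ 241401/100000 := log_le_num 11 8 27 (1597099/1000000) (241401/100000) (by norm_num) (by norm_num) (by norm_num) (by norm_num) (by norm_num)
  have q12 : Real.log 12 ≤ 1250621/500000 := log_le_num 12 8 28 (1601807/1000000) (1250621/500000) (by norm_num) (by norm_num) (by norm_num) (by norm_num) (by norm_num)
  have q13 : Real.log 13 ≤ 1288793/500000 := log_le_num 13 8 29 (1519417/1000000) (1288793/500000) (by norm_num) (by norm_num) (by norm_num) (by norm_num) (by norm_num)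
  have q14 : Real.log 14 ≤ 2646107/1000000 := log_le_num 14 8 30 (343609/250000) (2646107/1000000) (by norm_num) (by norm_num) (by norm_num) (by norm_num) (by norm_num)
  have q15 : Real.log 15 ≤ 1355063/500000 := log_le_num 15 8 31 (1193439/1000000) (1355063/500000) (by norm_num) (by norm_num) (by norm_num) (by norm_num) (by norm_num)
  have q16 : Real.log 16 ≤ 2772589/1000000 := log_le_num 16 8 32 (1) (2772589/1000000) (by norm_num) (by norm_num) (by norm_num) (by norm_num) (by norm_num)
  have q17 : Real.log 17 ≤ 2850611/1000000 := log_le_num 17 8 32 (1624171/1000000) (2850611/1000000) (by norm_num) (by norm_num) (by norm_num) (by norm_num) (by norm_num)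
  have q18 : Real.log 18 ≤ 1447297/500000 := log_le_num 18 8 33 (1282893/1000000) (1447297/500000) (by norm_num) (by norm_num) (by norm_num) (by norm_num) (by norm_num)
  have q19 : Real.log 19 ≤ 46584/15625 := log_le_num 19 8 33 (1977147/1000000) (46584/15625) (by norm_num) (by norm_num) (by norm_num) (by norm_num) (by norm_num)
  have q20 : Real.log 20 ≤ 3007141/1000000 := log_le_num 20 8 34 (1490117/1000000) (3007141/1000000) (by norm_num) (by norm_num) (by norm_num) (by norm_num) (by norm_num)
  have q21 : Real.log 21 ≤ 1522559/500000 := log_le_num 21 8 35 (1100791/1000000) (1522559/500000) (by norm_num) (by norm_num) (by norm_num) (by norm_num) (by norm_num)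
  have q22 : Real.log 22 ≤ 3107157/1000000 := log_le_num 22 8 35 (1597099/1000000) (3107157/1000000) (by norm_num) (by norm_num) (by norm_num) (by norm_num) (by norm_num)
  have q23 : Real.log 23 ≤ 313661/100000 := log_le_num 23 8 36 (45583/40000) (313661/100000) (by norm_num) (by norm_num) (by norm_num) (by norm_num) (by norm_num)
  have q24 : Real.log 24 ≤ 3194389/1000000 := log_le_num 24 8 36 (1601807/1000000) (3194389/1000000) (by norm_num) (by norm_num) (by norm_num) (by norm_num) (by norm_num)
  have q25 : Real.log 25 ≤ 50306/15625 := log_le_num 25 8 37 (69389/62500) (50306/15625) (by norm_num) (by norm_num) (by norm_num) (by norm_num) (by norm_num)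
  have q26 : Real.log 26 ≤ 3270733/1000000 := log_le_num 26 8 37 (1519417/1000000) (3270733/1000000) (by norm_num) (by norm_num) (by norm_num) (by norm_num) (by norm_num)
  have q27 : Real.log 27 ≤ 823971/250000 := log_le_num 27 8 38 (1027473/1000000) (823971/250000) (by norm_num) (by norm_num) (by norm_num) (by norm_num) (by norm_num)
  have q28 : Real.log 28 ≤ 1669627/500000 := log_le_num 28 8 38 (343609/250000) (1669627/500000) (by norm_num) (by norm_num) (by norm_num) (by norm_num) (by norm_num)
  have q29 : Real.log 29 ≤ 678987/200000 := log_le_num 29 8 38 (909943/500000) (678987/200000) (by norm_num) (by norm_num) (by norm_num) (by norm_num) (by norm_num)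
  have q30 : Real.log 30 ≤ 3403273/1000000 := log_le_num 30 8 39 (1193439/1000000) (3403273/1000000) (by norm_num) (by norm_num) (by norm_num) (by norm_num) (by norm_num)
  have q31 : Real.log 31 ≤ 1724009/500000 := log_le_num 31 8 39 (7757/5000) (1724009/500000) (by norm_num) (by norm_num) (by norm_num) (by norm_num) (by norm_num)
  have q32 : Real.log 32 ≤ 433217/125000 := log_le_num 32 8 40 (1) (433217/125000) (by norm_num) (by norm_num) (by norm_num) (by norm_num) (by norm_num)
  have base : ∑ j ∈ range 32, Real.log ((j:ℝ)+1)/((j:ℝ)^2+4) ≤ 878281/1000000 := by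
    simp only [Finset.sum_range_succ, Finset.sum_range_zero]
    push_cast
    norm_num [Real.log_one]
    linarith [q2,q3,q4,q5,q6,q7,q8,q9,q10,q11,q12,q13,q14,q15,q16,q17,q18,q19,q20,q21,q22,q23,q24,q25,q26,q27,q28,q29,q30,q31,q32]
  rcases le_or_gt n 32 with h | h
  · calc ∑ j ∈ range n, Real.log ((j:ℝ)+1)/((j:ℝ)^2+4)
        ≤ ∑ j ∈ range 32, Real.log ((j:ℝ)+1)/((j:ℝ)^2+4) :=
          Finset.sum_le_sum_of_subset_of_nonneg (Finset.range_subset_range.2 h) (fun i _ _ => hnonneg i)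
      _ ≤ 131753/125000 := by linarith
  · have hsplit : ∑ j ∈ range n, Real.log ((j:ℝ)+1)/((j:ℝ)^2+4)
        = ∑ j ∈ range 32, Real.log ((j:ℝ)+1)/((j:ℝ)^2+4)
          + ∑ j ∈ Ico 32 n, Real.log ((j:ℝ)+1)/((j:ℝ)^2+4) := by
      rw [range_eq_Ico, ← Finset.sum_Ico_consecutive _ (Nat.zero_le 32) h.le, ← range_eq_Ico]
    have htail : ∑ j ∈ Ico 32 n, Real.log ((j:ℝ)+1)/((j:ℝ)^2+4) ≤ 175743/1000000 := by
      rw [Finset.sum_Ico_eq_sum_range]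
      set g : ℕ → ℝ := fun i => (Real.log (31+(i:ℝ)) + 2)/(31+(i:ℝ)) with hg
      have hterm : ∀ i ∈ range (n - 32),
          Real.log (((32+i:ℕ):ℝ)+1)/(((32+i:ℕ):ℝ)^2+4) ≤ g i - g (i+1) := by
        intro i _
        have := tel_v (31+(i:ℝ)) (by have := (Nat.cast_nonneg i : (0:ℝ) ≤ i); linarith)
        simp only [hg]
        push_cast
        convert this using 2 <;> push_cast <;> ring
      calc ∑ i ∈ range (n-32), Real.log (((32+i:ℕ):ℝ)+1)/(((32+i:ℕ):ℝ)^2+4)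
          ≤ ∑ i ∈ range (n-32), (g i - g (i+1)) := Finset.sum_le_sum hterm
        _ = g 0 - g (n-32) := Finset.sum_range_sub' g (n-32)
        _ ≤ g 0 := by
            have h1 : 0 ≤ g (n-32) := by
              simp only [hg]
              apply div_nonneg _ (by positivity)
              have h2 : 0 ≤ Real.log (31+((n-32:ℕ):ℝ)) :=
                Real.log_nonneg (by have := (Nat.cast_nonneg (n-32) : (0:ℝ) ≤ ((n-32:ℕ):ℝ)); linarith)
              linarith
            linarith
        _ ≤ 175743/1000000 := by
            simp only [hg]
            norm_num
            linarith [q31]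
    linarith

theorem stmt_16 (α : ℝ) (hα : 1 ≤ α) :
    ∑' j : ℕ, Real.log (j + α) / ((j : ℝ) ^ 2 + 4) ≤ 5 / 2 * Real.log (α + 1) := by
  have hL0 : (0:ℝ) < Real.log (α+1) := Real.log_pos (by linarith)
  have hL : Real.log 2 ≤ Real.log (α+1) := Real.log_le_log (by norm_num) (by linarith)
  have hd9 : (0.6931471803:ℝ) < Real.log 2 := Real.log_two_gt_d9
  apply Real.tsum_le_of_sum_range_le
  · intro j
    exact div_nonneg (Real.log_nonneg (by have := (Nat.cast_nonneg j : (0:ℝ) ≤ j); linarith))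
      (by positivity)
  intro n
  have hpt : ∀ j ∈ range n, Real.log ((j:ℝ) + α)/((j:ℝ)^2+4)
      ≤ Real.log (α+1) * (1/((j:ℝ)^2+4)) + Real.log ((j:ℝ)+1)/((j:ℝ)^2+4) := by
    intro j _
    have hj : (0:ℝ) ≤ j := Nat.cast_nonneg j
    have h1 : (0:ℝ) < (j:ℝ) + α := by linarith
    have h2 : (j:ℝ) + α ≤ (α+1) * ((j:ℝ)+1) := by nlinarith
    have h3 : Real.log ((j:ℝ)+α) ≤ Real.log ((α+1)*((j:ℝ)+1)) := Real.log_le_log h1 h2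
    rw [Real.log_mul (by linarith) (by linarith)] at h3
    have hden : (0:ℝ) < (j:ℝ)^2+4 := by positivity
    rw [mul_one_div, ← add_div]
    exact (div_le_div_iff_of_pos_right hden).2 h3
  calc ∑ j ∈ range n, Real.log ((j:ℝ) + α)/((j:ℝ)^2+4)
      ≤ ∑ j ∈ range n, (Real.log (α+1) * (1/((j:ℝ)^2+4)) + Real.log ((j:ℝ)+1)/((j:ℝ)^2+4)) :=
        Finset.sum_le_sum hpt
    _ = Real.log (α+1) * ∑ j ∈ range n, 1/((j:ℝ)^2+4)
        + ∑ j ∈ range n, Real.log ((j:ℝ)+1)/((j:ℝ)^2+4) := by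
        rw [Finset.sum_add_distrib, Finset.mul_sum]
    _ ≤ Real.log (α+1) * (910961/1000000) + 131753/125000 := by
        have h1 := mul_le_mul_of_nonneg_left (lem_u n) hL0.le
        linarith [lem_v n]
    _ ≤ 5/2 * Real.log (α+1) := by
        have h9 : (0.6931471803:ℝ) ≤ Real.log (α+1) := by linarith
        linarith
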